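/- Let G be an infinite, locally finite, strongly connected, quasi-transitive directed graph that is not unimodular. Then there exist α > 0 and a doubly infinite sequence of vertices (v_i)_{i∈ℤ} such that d_G(v_i, v_j) ≥ α|i−j| for all i,j ∈ ℤ (where d_G is undirected graph distance), and for each i ≥ 0 there are directed edges from v_{i+1} to v_i and from v_{−i−1} to v_{−i}. -/

import Mathlib

open Filter ENNReal

structure Dgraph where
  V : Type
  E : Type
  src : E → V
  tgt : E → V

namespace Dgraph

variable (G : Dgraph)

/-- Every vertex has finite in-degree and out-degree. -/
def LocallyFinite : Prop :=
  ∀ v : G.V, {e : G.E | G.src e = v}.Finite ∧ {e : G.E | G.tgt e = v}.Finite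

/-- There is a directed edge from `u` to `v`. -/
def Adj (u v : G.V) : Prop := ∃ e : G.E, G.src e = u ∧ G.tgt e = v

/-- Directed walks exist between any ordered pair of vertices. -/
def StronglyConnected : Prop := ∀ u v : G.V, Relation.ReflTransGen G.Adj u v

/-- An automorphism of a directed multigraph. -/
structure Aut where
  vmap : G.V ≃ G.V
  emap : G.E ≃ G.E
  src_eq : ∀ e, G.src (emap e) = vmap (G.src e)
  tgt_eq : ∀ e, G.tgt (emap e) = vmap (G.tgt e)

/-- `u` and `v` are in the same transitivity class. -/
def SameOrbit (u v : G.V) : Prop := ∃ φ : G.Aut, φ.vmap u = v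

/-- Finitely many transitivity classes. -/
def QuasiTransitive : Prop := ∃ S : Finset G.V, ∀ v : G.V, ∃ s ∈ S, G.SameOrbit s v

def VertexTransitive : Prop := ∀ u v : G.V, G.SameOrbit u v

/-- The orbit of `v` under the stabiliser of `u`. -/
def stabOrbit (u v : G.V) : Set G.V := {w | ∃ φ : G.Aut, φ.vmap u = u ∧ φ.vmap v = w}

/-- Unimodularity: the weight function is constant on transitivity classes,
equivalently `|stab(u)v| = |stab(v)u|` whenever `u, v` are in the same orbit. -/
def Unimodular : Prop := ∀ u v : G.V, G.SameOrbit u v →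
  Nat.card (G.stabOrbit u v) = Nat.card (G.stabOrbit v u)

/-- The edge-reversal of `G`. -/
def rev : Dgraph := ⟨G.V, G.E, G.tgt, G.src⟩

/-- Each edge has a reverse edge: `G` represents an undirected graph. -/
def Undirected : Prop := ∃ ι : G.E ≃ G.E, ∀ e : G.E,
  G.src (ι e) = G.tgt e ∧ G.tgt (ι e) = G.src e ∧ ι (ι e) = e

/-- An `n`-step self-avoiding walk starting at `v`, directed away from `v`. -/
@[ext]
structure SAW (n : ℕ) (v : G.V) where
  vs : Fin (n + 1) → G.V
  es : Fin n → G.E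
  hsrc : ∀ i : Fin n, G.src (es i) = vs i.castSucc
  htgt : ∀ i : Fin n, G.tgt (es i) = vs i.succ
  hstart : vs 0 = v
  hinj : Function.Injective vs

/-- `w` is an initial segment of a singly infinite SAW from `v`. -/
def IsFwdExt {n : ℕ} {v : G.V} (w : G.SAW n v) : Prop :=
  ∃ (vs : ℕ → G.V) (es : ℕ → G.E), Function.Injective vs ∧
    (∀ i : ℕ, G.src (es i) = vs i ∧ G.tgt (es i) = vs (i + 1)) ∧
    (∀ i : Fin (n + 1), vs i = w.vs i) ∧ (∀ i : Fin n, es i = w.es i)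

/-- `w` is the final segment of a singly infinite SAW from infinity ending at the
endpoint of `w` (indexed backwards from the endpoint). -/
def IsBwdExt {n : ℕ} {v : G.V} (w : G.SAW n v) : Prop :=
  ∃ (vs : ℕ → G.V) (es : ℕ → G.E), Function.Injective vs ∧
    (∀ i : ℕ, G.src (es i) = vs (i + 1) ∧ G.tgt (es i) = vs i) ∧
    (∀ i : Fin (n + 1), vs (n - (i : ℕ)) = w.vs i) ∧
    (∀ i : Fin n, es (n - 1 - (i : ℕ)) = w.es i)

/-- `w` is a sub-walk of a doubly infinite SAW. -/
def IsDblExt {n : ℕ} {v : G.V} (w : G.SAW n v) : Prop :=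
  ∃ (vs : ℤ → G.V) (es : ℤ → G.E), Function.Injective vs ∧
    (∀ i : ℤ, G.src (es i) = vs i ∧ G.tgt (es i) = vs (i + 1)) ∧
    ∃ k : ℤ, (∀ i : Fin (n + 1), vs (k + (i : ℕ)) = w.vs i) ∧
      (∀ i : Fin n, es (k + (i : ℕ)) = w.es i)

noncomputable def sigma (n : ℕ) (v : G.V) : ℕ := Nat.card (G.SAW n v)
noncomputable def sigmaF (n : ℕ) (v : G.V) : ℕ := Nat.card {w : G.SAW n v // G.IsFwdExt w}
noncomputable def sigmaB (n : ℕ) (v : G.V) : ℕ := Nat.card {w : G.SAW n v // G.IsBwdExt w}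
noncomputable def sigmaFB (n : ℕ) (v : G.V) : ℕ := Nat.card {w : G.SAW n v // G.IsDblExt w}

noncomputable def ssigma (n : ℕ) : ℝ≥0∞ := ⨆ v : G.V, (G.sigma n v : ℝ≥0∞)
noncomputable def ssigmaF (n : ℕ) : ℝ≥0∞ := ⨆ v : G.V, (G.sigmaF n v : ℝ≥0∞)
noncomputable def ssigmaB (n : ℕ) : ℝ≥0∞ := ⨆ v : G.V, (G.sigmaB n v : ℝ≥0∞)
noncomputable def ssigmaFB (n : ℕ) : ℝ≥0∞ := ⨆ v : G.V, (G.sigmaFB n v : ℝ≥0∞)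

/-- Undirected graph distance: length of a shortest path ignoring orientations. -/
noncomputable def udist (u v : G.V) : ℕ :=
  sInf {n : ℕ | ∃ f : Fin (n + 1) → G.V, f 0 = u ∧ f (Fin.last n) = v ∧
    ∀ i : Fin n, (∃ e, G.src e = f i.castSucc ∧ G.tgt e = f i.succ) ∨
      (∃ e, G.src e = f i.succ ∧ G.tgt e = f i.castSucc)}

end Dgraph

open Filter ENNReal

attribute [local instance] Classical.propDecidable

/-! ### Auxiliary development -/

set_option linter.dupNamespace false

namespace Dgraph

open MulAction Subgroup

variable {G : Dgraph}

theorem Aut.ext' {φ ψ : G.Aut} (h1 : φ.vmap = ψ.vmap) (h2 : φ.emap = ψ.emap) : φ = ψ := by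
  cases φ; cases ψ; simp_all

instance : Group G.Aut where
  mul φ ψ := ⟨ψ.vmap.trans φ.vmap, ψ.emap.trans φ.emap,
    fun e => by simp [φ.src_eq, ψ.src_eq],
    fun e => by simp [φ.tgt_eq, ψ.tgt_eq]⟩
  one := ⟨Equiv.refl _, Equiv.refl _, fun _ => rfl, fun _ => rfl⟩
  inv φ := ⟨φ.vmap.symm, φ.emap.symm,
    fun e => by
      apply φ.vmap.injective
      rw [Equiv.apply_symm_apply, ← φ.src_eq, Equiv.apply_symm_apply],
    fun e => by
      apply φ.vmap.injective
      rw [Equiv.apply_symm_apply, ← φ.tgt_eq, Equiv.apply_symm_apply]⟩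
  mul_assoc a b c := Aut.ext' (by rfl) (by rfl)
  one_mul a := Aut.ext' (by ext x; rfl) (by ext x; rfl)
  mul_one a := Aut.ext' (by ext x; rfl) (by ext x; rfl)
  inv_mul_cancel a := Aut.ext' (by ext x; exact a.vmap.symm_apply_apply x)
    (by ext x; exact a.emap.symm_apply_apply x)

instance : MulAction G.Aut G.V where
  smul φ v := φ.vmap v
  one_smul _ := rfl
  mul_smul _ _ _ := rfl

theorem smul_def (g : G.Aut) (v : G.V) : g • v = g.vmap v := rfl

theorem smul_adj {x y : G.V} (g : G.Aut) (h : G.Adj x y) : G.Adj (g • x) (g • y) := by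
  obtain ⟨e, he1, he2⟩ := h
  exact ⟨g.emap e, by rw [g.src_eq, he1]; rfl, by rw [g.tgt_eq, he2]; rfl⟩

/-- stabilizer as a subgroup -/
noncomputable abbrev stab (G : Dgraph) (x : G.V) : Subgroup G.Aut :=
  MulAction.stabilizer G.Aut x

theorem stabOrbit_eq (x y : G.V) :
    G.stabOrbit x y = MulAction.orbit (G.stab x) y := by
  ext w
  constructor
  · rintro ⟨φ, h1, h2⟩
    exact ⟨⟨φ, h1⟩, h2⟩
  · rintro ⟨⟨φ, h1⟩, h2⟩
    exact ⟨φ, h1, h2⟩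

theorem card_orbit_eq_relindex (H : Subgroup G.Aut) (z : G.V) :
    Nat.card (MulAction.orbit H z) = (G.stab z).relIndex H := by
  have h1 : Nat.card (MulAction.orbit H z) = Nat.card (H ⧸ MulAction.stabilizer H z) :=
    Nat.card_congr (MulAction.orbitEquivQuotientStabilizer H z)
  have h2 : MulAction.stabilizer H z = (G.stab z).subgroupOf H := by
    ext g
    simp only [MulAction.mem_stabilizer_iff, Subgroup.mem_subgroupOf]
    rfl
  rw [h1, h2]
  rfl

theorem card_stabOrbit (x y : G.V) :
    Nat.card (G.stabOrbit x y) = (G.stab y).relIndex (G.stab x) := by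
  rw [stabOrbit_eq, card_orbit_eq_relindex]

/-- invariance of stabOrbit under automorphisms -/
theorem stabOrbit_smul (g : G.Aut) (x y : G.V) :
    G.stabOrbit (g • x) (g • y) = (g • ·) '' G.stabOrbit x y := by
  ext w
  constructor
  · rintro ⟨φ, h1, h2⟩
    have h1' : φ • (g • x) = g • x := h1
    have h2' : φ • (g • y) = w := h2
    refine ⟨(g⁻¹ * φ * g) • y, ⟨g⁻¹ * φ * g, ?_, rfl⟩, ?_⟩
    · show (g⁻¹ * φ * g) • x = x
      rw [mul_smul, mul_smul, h1']
      exact inv_smul_smul g x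
    · show g • ((g⁻¹ * φ * g) • y) = w
      rw [mul_smul, mul_smul, ← h2']
      exact smul_inv_smul g _
  · rintro ⟨w', ⟨φ, h1, h2⟩, rfl⟩
    have h1' : φ • x = x := h1
    have h2' : φ • y = w' := h2
    refine ⟨g * φ * g⁻¹, ?_, ?_⟩
    · show (g * φ * g⁻¹) • (g • x) = g • x
      rw [mul_smul, mul_smul, inv_smul_smul, h1']
    · show (g * φ * g⁻¹) • (g • y) = g • w'
      rw [mul_smul, mul_smul, inv_smul_smul, h2']

theorem card_stabOrbit_smul (g : G.Aut) (x y : G.V) :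
    Nat.card (G.stabOrbit (g • x) (g • y)) = Nat.card (G.stabOrbit x y) := by
  rw [stabOrbit_smul]
  exact Nat.card_image_of_injective (MulAction.injective g) _

/-- triple cocycle identity on ℕ-cardinalities, given finiteness inputs -/
theorem card_triple (x y z : G.V)
    (hfin : ∀ (H : Subgroup G.Aut) (w : G.V), (H ≤ G.stab x ∨ H ≤ G.stab y ∨ H ≤ G.stab z) →
      (G.stab w).relIndex H ≠ 0) :
    Nat.card (G.stabOrbit x y) * Nat.card (G.stabOrbit y z) * Nat.card (G.stabOrbit z x)
      = Nat.card (G.stabOrbit y x) * Nat.card (G.stabOrbit z y) * Nat.card (G.stabOrbit x z) := by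
  set A := G.stab x with hA
  set B := G.stab y with hB
  set C := G.stab z with hC
  set D := A ⊓ B ⊓ C with hD
  rw [card_stabOrbit, card_stabOrbit, card_stabOrbit, card_stabOrbit, card_stabOrbit,
    card_stabOrbit]
  set tAB := D.relIndex (A ⊓ B) with htAB
  set tBC := D.relIndex (B ⊓ C) with htBC
  set tCA := D.relIndex (C ⊓ A) with htCA
  have dbc : D = (B ⊓ C) ⊓ A := by rw [hD]; ac_rfl
  have dca : D = (C ⊓ A) ⊓ B := by rw [hD]; ac_rfl
  have e1 : tAB * (B.relIndex A) = D.relIndex A := by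
    rw [← Subgroup.inf_relIndex_left A B]
    exact Subgroup.relIndex_mul_relIndex D (A ⊓ B) A (hD ▸ inf_le_left) inf_le_left
  have f1 : tAB * (A.relIndex B) = D.relIndex B := by
    rw [← Subgroup.inf_relIndex_right A B]
    exact Subgroup.relIndex_mul_relIndex D (A ⊓ B) B (hD ▸ inf_le_left) inf_le_right
  have e2 : tBC * (C.relIndex B) = D.relIndex B := by
    rw [← Subgroup.inf_relIndex_left B C]
    exact Subgroup.relIndex_mul_relIndex D (B ⊓ C) B
      (by rw [dbc]; exact inf_le_left) inf_le_left
  have f2 : tBC * (B.relIndex C) = D.relIndex C := by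
    rw [← Subgroup.inf_relIndex_right B C]
    exact Subgroup.relIndex_mul_relIndex D (B ⊓ C) C
      (by rw [dbc]; exact inf_le_left) inf_le_right
  have e3 : tCA * (A.relIndex C) = D.relIndex C := by
    rw [← Subgroup.inf_relIndex_left C A]
    exact Subgroup.relIndex_mul_relIndex D (C ⊓ A) C
      (by rw [dca]; exact inf_le_left) inf_le_left
  have f3 : tCA * (C.relIndex A) = D.relIndex A := by
    rw [← Subgroup.inf_relIndex_right C A]
    exact Subgroup.relIndex_mul_relIndex D (C ⊓ A) A
      (by rw [dca]; exact inf_le_left) inf_le_right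
  have htAB0 : tAB ≠ 0 := by
    have h : tAB = C.relIndex (A ⊓ B) := by
      rw [htAB, ← Subgroup.inf_relIndex_right C (A ⊓ B)]
      congr 1
      rw [hD]; ac_rfl
    rw [h, hC]
    exact hfin (A ⊓ B) z (Or.inl inf_le_left)
  have htBC0 : tBC ≠ 0 := by
    have h : tBC = A.relIndex (B ⊓ C) := by
      rw [htBC, ← Subgroup.inf_relIndex_right A (B ⊓ C)]
      congr 1
      rw [hD]; ac_rfl
    rw [h, hA]
    exact hfin (B ⊓ C) x (Or.inr (Or.inl inf_le_left))
  have htCA0 : tCA ≠ 0 := by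
    have h : tCA = B.relIndex (C ⊓ A) := by
      rw [htCA, ← Subgroup.inf_relIndex_right B (C ⊓ A)]
      congr 1
      rw [hD]; ac_rfl
    rw [h, hB]
    exact hfin (C ⊓ A) y (Or.inr (Or.inr inf_le_left))
  have hL : (tAB * tBC * tCA) * (B.relIndex A * (C.relIndex B) * (A.relIndex C)) =
      D.relIndex A * D.relIndex B * D.relIndex C := by
    rw [← e1, ← e2, ← e3]; ring
  have hR : (tAB * tBC * tCA) * (A.relIndex B * (B.relIndex C) * (C.relIndex A)) =
      D.relIndex A * D.relIndex B * D.relIndex C := by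
    rw [← f1, ← f2, ← f3]; ring
  have hpos : 0 < tAB * tBC * tCA := Nat.pos_of_ne_zero (by positivity)
  exact Nat.eq_of_mul_eq_mul_left hpos (hL.trans hR.symm)


/-! ### udist API -/

/-- undirected adjacency -/
def uadj (G : Dgraph) (x y : G.V) : Prop :=
  (∃ e, G.src e = x ∧ G.tgt e = y) ∨ (∃ e, G.src e = y ∧ G.tgt e = x)

theorem uadj_symm {x y : G.V} (h : G.uadj x y) : G.uadj y x := h.symm

theorem Adj.uadj {x y : G.V} (h : G.Adj x y) : G.uadj x y := Or.inl h

theorem uadj_smul {x y : G.V} (g : G.Aut) (h : G.uadj x y) : G.uadj (g • x) (g • y) := by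
  rcases h with h | h
  · exact (smul_adj g h).uadj
  · exact uadj_symm (smul_adj g h).uadj

/-- set of lengths of undirected walks from x to y, ℕ-indexed version -/
def upaths (G : Dgraph) (x y : G.V) : Set ℕ :=
  {n | ∃ f : ℕ → G.V, f 0 = x ∧ f n = y ∧ ∀ i < n, G.uadj (f i) (f (i + 1))}

theorem udist_eq (x y : G.V) : G.udist x y = sInf (G.upaths x y) := by
  have : {n : ℕ | ∃ f : Fin (n + 1) → G.V, f 0 = x ∧ f (Fin.last n) = y ∧
      ∀ i : Fin n, (∃ e, G.src e = f i.castSucc ∧ G.tgt e = f i.succ) ∨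
        (∃ e, G.src e = f i.succ ∧ G.tgt e = f i.castSucc)} = G.upaths x y := by
    ext n
    constructor
    · rintro ⟨f, h0, hl, hstep⟩
      have key : ∀ (k : ℕ) (hk : k ≤ n), (⟨min k n, by omega⟩ : Fin (n + 1)) = ⟨k, by omega⟩ :=
        fun k hk => Fin.ext (by simp [min_eq_left hk])
      refine ⟨fun k => f ⟨min k n, by omega⟩, ?_, ?_, ?_⟩
      · beta_reduce
        rw [key 0 (Nat.zero_le n), ← h0]
        exact congrArg f (Fin.ext (by simp))
      · beta_reduce
        rw [key n le_rfl, ← hl]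
        exact congrArg f (Fin.ext (by simp [Fin.last]))
      · intro i hi
        beta_reduce
        have h := hstep ⟨i, hi⟩
        have e1 : (⟨i, hi⟩ : Fin n).castSucc = (⟨i, by omega⟩ : Fin (n + 1)) :=
          Fin.ext (by simp)
        have e2 : (⟨i, hi⟩ : Fin n).succ = (⟨i + 1, by omega⟩ : Fin (n + 1)) :=
          Fin.ext (by simp)
        rw [e1, e2] at h
        rw [key i (by omega), key (i + 1) (by omega)]
        exact h
    · rintro ⟨F, h0, hl, hstep⟩
      exact ⟨fun i => F i.val, h0, hl, fun i => hstep i.val i.isLt⟩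
  rw [udist, this]

theorem upaths_nonempty (hsc : G.StronglyConnected) (x y : G.V) :
    (G.upaths x y).Nonempty := by
  have h : Relation.ReflTransGen G.uadj x y :=
    Relation.ReflTransGen.mono (fun a b (hab : G.Adj a b) => hab.uadj) x y (hsc x y)
  induction h with
  | refl => exact ⟨0, fun _ => x, rfl, rfl, fun i hi => absurd hi (by omega)⟩
  | @tail b c _ hbc ih =>
    obtain ⟨n, f, h0, hl, hstep⟩ := ih
    refine ⟨n + 1, fun k => if k ≤ n then f k else c, ?_, ?_, ?_⟩
    · simpa using h0
    · simp
    · intro i hi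
      rcases Nat.lt_or_ge i n with h | h
      · simpa [Nat.le_of_lt h, Nat.succ_le_of_lt h] using hstep i h
      · have hin : i = n := by omega
        subst hin
        simpa [hl] using hbc

theorem udist_exists (hsc : G.StronglyConnected) (x y : G.V) :
    ∃ f : ℕ → G.V, f 0 = x ∧ f (G.udist x y) = y ∧
      ∀ i < G.udist x y, G.uadj (f i) (f (i + 1)) := by
  have := Nat.sInf_mem (upaths_nonempty hsc x y)
  rw [← udist_eq] at this
  exact this

theorem udist_le {x y : G.V} {n : ℕ} (h : n ∈ G.upaths x y) : G.udist x y ≤ n := by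
  rw [udist_eq]; exact Nat.sInf_le h

theorem udist_self (x : G.V) : G.udist x x = 0 :=
  Nat.le_zero.mp (udist_le ⟨fun _ => x, rfl, rfl, fun i hi => absurd hi (by omega)⟩)

theorem eq_of_udist_eq_zero (hsc : G.StronglyConnected) {x y : G.V}
    (h : G.udist x y = 0) : x = y := by
  obtain ⟨f, h0, hl, _⟩ := udist_exists hsc x y
  rw [h] at hl
  rw [← h0, ← hl]

theorem udist_smul_le (hsc : G.StronglyConnected) (x y : G.V) (g : G.Aut) :
    G.udist (g • x) (g • y) ≤ G.udist x y := by
  obtain ⟨f, h0, hl, hstep⟩ := udist_exists hsc x y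
  exact udist_le ⟨fun k => g • f k, by simp [h0], by simp [hl], fun i hi => uadj_smul g (hstep i hi)⟩

/-- neighbourhood of a vertex -/
def nbhd (G : Dgraph) (x : G.V) : Set G.V := {y | G.uadj x y}

theorem nbhd_finite (hlf : G.LocallyFinite) (x : G.V) : (G.nbhd x).Finite := by
  have h1 := (hlf x).1
  have h2 := (hlf x).2
  have : G.nbhd x ⊆ (G.tgt '' {e | G.src e = x}) ∪ (G.src '' {e | G.tgt e = x}) := by
    rintro y (⟨e, he1, he2⟩ | ⟨e, he1, he2⟩)
    · exact Or.inl ⟨e, he1, he2⟩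
    · exact Or.inr ⟨e, he2, he1⟩
  exact Set.Finite.subset ((h1.image _).union (h2.image _)) this

theorem ball_finite (hlf : G.LocallyFinite) (hsc : G.StronglyConnected) (x : G.V) (n : ℕ) :
    {y : G.V | G.udist x y ≤ n}.Finite := by
  induction n with
  | zero =>
    refine Set.Finite.subset (Set.finite_singleton x) fun y hy => ?_
    have : G.udist x y = 0 := Nat.le_zero.mp hy
    exact (eq_of_udist_eq_zero hsc this).symm
  | succ n ih =>
    have hsub : {y : G.V | G.udist x y ≤ n + 1} ⊆
        {y : G.V | G.udist x y ≤ n} ∪ ⋃ w ∈ {y : G.V | G.udist x y ≤ n}, G.nbhd w := by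
      intro y hy
      rcases Nat.eq_zero_or_pos (G.udist x y) with h0 | hpos
      · exact Or.inl (by simp [Set.mem_setOf_eq, h0])
      · obtain ⟨f, h0, hl, hstep⟩ := udist_exists hsc x y
        have hyn : G.udist x y ≤ n + 1 := hy
        set m := G.udist x y with hm
        right
        have hw : f (m - 1) ∈ {y : G.V | G.udist x y ≤ n} := by
          have : G.udist x (f (m - 1)) ≤ m - 1 :=
            udist_le ⟨f, h0, rfl, fun i hi => hstep i (by omega)⟩
          simp only [Set.mem_setOf_eq]
          omega
        have hy' : y ∈ G.nbhd (f (m - 1)) := by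
          have hs := hstep (m - 1) (by omega)
          have hfm : f (m - 1 + 1) = y := by
            rw [show m - 1 + 1 = m by omega, hl]
          rw [hfm] at hs
          exact hs
        exact Set.mem_biUnion hw hy'
    exact Set.Finite.subset (ih.union (Set.Finite.biUnion ih fun w _ => nbhd_finite hlf w)) hsub

/-- finiteness of relIndex for subgroups of stabilizers -/
theorem relindex_stab_ne_zero (hlf : G.LocallyFinite) (hsc : G.StronglyConnected)
    {x : G.V} {H : Subgroup G.Aut} (hH : H ≤ G.stab x) (w : G.V) :
    (G.stab w).relIndex H ≠ 0 := by
  rw [← card_orbit_eq_relindex]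
  have hsub : MulAction.orbit H w ⊆ {y : G.V | G.udist x y ≤ G.udist x w} := by
    rintro y ⟨g, rfl⟩
    have hg : (g : G.Aut) • x = x := hH g.2
    have h2 : G.udist ((g : G.Aut) • x) ((g : G.Aut) • w) ≤ G.udist x w :=
      udist_smul_le hsc x w g
    rw [hg] at h2
    exact h2
  have hfin : (MulAction.orbit H w).Finite :=
    Set.Finite.subset (ball_finite hlf hsc x (G.udist x w)) hsub
  have hne : Nonempty (MulAction.orbit H w) := ⟨⟨w, MulAction.mem_orbit_self w⟩⟩
  exact Nat.card_ne_zero.mpr ⟨hne, hfin.to_subtype⟩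


/-! ### the weight cocycle -/

noncomputable def rr (G : Dgraph) (x y : G.V) : ℕ := Nat.card (G.stabOrbit x y)

theorem rr_pos (hlf : G.LocallyFinite) (hsc : G.StronglyConnected) (x y : G.V) :
    0 < G.rr x y := by
  refine Nat.pos_of_ne_zero ?_
  rw [rr, card_stabOrbit]
  exact relindex_stab_ne_zero hlf hsc (le_refl (G.stab x)) y

noncomputable def mw (G : Dgraph) (x y : G.V) : ℝ := (G.rr x y : ℝ) / (G.rr y x : ℝ)

theorem mw_pos (hlf : G.LocallyFinite) (hsc : G.StronglyConnected) (x y : G.V) :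
    0 < G.mw x y :=
  div_pos (by exact_mod_cast rr_pos hlf hsc x y) (by exact_mod_cast rr_pos hlf hsc y x)

theorem mw_self (hlf : G.LocallyFinite) (hsc : G.StronglyConnected) (x : G.V) :
    G.mw x x = 1 :=
  div_self (by exact_mod_cast (rr_pos hlf hsc x x).ne')

theorem mw_cocycle (hlf : G.LocallyFinite) (hsc : G.StronglyConnected) (x y z : G.V) :
    G.mw x y * G.mw y z = G.mw x z := by
  have htriple := card_triple x y z (fun H w hH => by
    rcases hH with h | h | h
    · exact relindex_stab_ne_zero hlf hsc h w
    · exact relindex_stab_ne_zero hlf hsc h w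
    · exact relindex_stab_ne_zero hlf hsc h w)
  have hcast : (G.rr x y : ℝ) * G.rr y z * G.rr z x = G.rr y x * G.rr z y * G.rr x z := by
    exact_mod_cast congrArg (Nat.cast (R := ℝ)) htriple
  have h1 : (G.rr y x : ℝ) ≠ 0 := by exact_mod_cast (rr_pos hlf hsc y x).ne'
  have h2 : (G.rr z y : ℝ) ≠ 0 := by exact_mod_cast (rr_pos hlf hsc z y).ne'
  have h3 : (G.rr z x : ℝ) ≠ 0 := by exact_mod_cast (rr_pos hlf hsc z x).ne'
  rw [mw, mw, mw]
  field_simp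
  linear_combination hcast

theorem mw_smul (g : G.Aut) (x y : G.V) : G.mw (g • x) (g • y) = G.mw x y := by
  rw [mw, mw, rr, rr, rr, rr, card_stabOrbit_smul, card_stabOrbit_smul]

theorem mw_inv (hlf : G.LocallyFinite) (hsc : G.StronglyConnected) (x y : G.V) :
    G.mw y x = (G.mw x y)⁻¹ := by
  have h := mw_cocycle hlf hsc x y x
  rw [mw_self hlf hsc] at h
  exact eq_inv_of_mul_eq_one_right h

theorem mw_pow_smul (hlf : G.LocallyFinite) (hsc : G.StronglyConnected) (ψ : G.Aut) (u : G.V) :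
    ∀ k : ℕ, G.mw ((ψ ^ k) • u) u = (G.mw (ψ • u) u) ^ k := by
  intro k
  induction k with
  | zero => simp [mw_self hlf hsc]
  | succ k ih =>
    have h1 : (ψ ^ (k + 1)) • u = (ψ ^ k) • (ψ • u) := by
      rw [pow_succ, mul_smul]
    have h2 : G.mw ((ψ ^ (k + 1)) • u) ((ψ ^ k) • u) = G.mw (ψ • u) u := by
      rw [h1, mw_smul]
    calc G.mw ((ψ ^ (k + 1)) • u) u
        = G.mw ((ψ ^ (k + 1)) • u) ((ψ ^ k) • u) * G.mw ((ψ ^ k) • u) u :=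
          (mw_cocycle hlf hsc _ _ _).symm
      _ = (G.mw (ψ • u) u) ^ (k + 1) := by rw [h2, ih]; ring

theorem mw_pow_smul_inv (hlf : G.LocallyFinite) (hsc : G.StronglyConnected)
    (ψ : G.Aut) (u : G.V) :
    ∀ k : ℕ, G.mw ((ψ⁻¹ ^ k) • u) u = ((G.mw (ψ • u) u)⁻¹) ^ k := by
  intro k
  have hbase : G.mw (ψ⁻¹ • u) u = (G.mw (ψ • u) u)⁻¹ := by
    have : G.mw (ψ⁻¹ • u) u = G.mw u (ψ • u) := by
      have := mw_smul ψ (ψ⁻¹ • u) u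
      rw [smul_inv_smul] at this
      exact this.symm
    rw [this, ← mw_inv hlf hsc]
  induction k with
  | zero => simp [mw_self hlf hsc]
  | succ k ih =>
    have h1 : (ψ⁻¹ ^ (k + 1)) • u = (ψ⁻¹ ^ k) • (ψ⁻¹ • u) := by
      rw [pow_succ, mul_smul]
    have h2 : G.mw ((ψ⁻¹ ^ (k + 1)) • u) ((ψ⁻¹ ^ k) • u) = G.mw (ψ⁻¹ • u) u := by
      rw [h1, mw_smul]
    calc G.mw ((ψ⁻¹ ^ (k + 1)) • u) u
        = G.mw ((ψ⁻¹ ^ (k + 1)) • u) ((ψ⁻¹ ^ k) • u) * G.mw ((ψ⁻¹ ^ k) • u) u :=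
          (mw_cocycle hlf hsc _ _ _).symm
      _ = ((G.mw (ψ • u) u)⁻¹) ^ (k + 1) := by rw [h2, hbase, ih]; ring

/-! ### degree bounds -/

noncomputable def udeg (G : Dgraph) (x : G.V) : ℕ := Nat.card (G.nbhd x)

theorem nbhd_smul (g : G.Aut) (x : G.V) : G.nbhd (g • x) = (g • ·) '' G.nbhd x := by
  ext y
  constructor
  · intro hy
    refine ⟨g⁻¹ • y, ?_, smul_inv_smul g y⟩
    have := uadj_smul g⁻¹ hy
    rw [inv_smul_smul] at this
    exact this
  · rintro ⟨y', hy', rfl⟩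
    exact uadj_smul g hy'

theorem udeg_smul (g : G.Aut) (x : G.V) : G.udeg (g • x) = G.udeg x := by
  rw [udeg, udeg, nbhd_smul]
  exact Nat.card_image_of_injective (MulAction.injective g) _

theorem exists_deg_bound (hqt : G.QuasiTransitive) : ∃ Δ : ℕ, ∀ x : G.V, G.udeg x ≤ Δ := by
  obtain ⟨S, hS⟩ := hqt
  refine ⟨S.sup (fun s => G.udeg s), fun x => ?_⟩
  obtain ⟨s, hs, φ, hφ⟩ := hS x
  have : G.udeg x = G.udeg s := by
    rw [← hφ]
    exact udeg_smul φ s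
  rw [this]
  exact Finset.le_sup hs

theorem rr_le_udeg (hlf : G.LocallyFinite) {x y : G.V} (h : G.uadj x y) :
    G.rr x y ≤ G.udeg x := by
  refine Nat.card_mono (nbhd_finite hlf x).to_subtype ?_
  rintro w ⟨φ, h1, h2⟩
  have := uadj_smul φ h
  rw [show φ • x = x from h1, show φ • y = w from h2] at this
  exact this

theorem mw_le_of_uadj (hlf : G.LocallyFinite) (hsc : G.StronglyConnected)
    {Δ : ℕ} (hΔ : ∀ x : G.V, G.udeg x ≤ Δ) {x y : G.V} (h : G.uadj x y) :
    G.mw x y ≤ max (Δ : ℝ) 2 := by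
  have h1 : (1 : ℝ) ≤ (G.rr y x : ℝ) := by exact_mod_cast rr_pos hlf hsc y x
  have h2 : (G.rr x y : ℝ) ≤ Δ := by exact_mod_cast (rr_le_udeg hlf h).trans (hΔ x)
  calc G.mw x y ≤ (G.rr x y : ℝ) := div_le_self (by positivity) h1
      _ ≤ Δ := h2
      _ ≤ max (Δ : ℝ) 2 := le_max_left _ _

theorem mw_le_pow_udist (hlf : G.LocallyFinite) (hsc : G.StronglyConnected)
    {Δ : ℕ} (hΔ : ∀ x : G.V, G.udeg x ≤ Δ) (x y : G.V) :
    G.mw x y ≤ (max (Δ : ℝ) 2) ^ (G.udist x y) ∧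
    G.mw y x ≤ (max (Δ : ℝ) 2) ^ (G.udist x y) := by
  set D : ℝ := max (Δ : ℝ) 2 with hD
  have hD1 : (1 : ℝ) ≤ D := le_trans (by norm_num) (le_max_right _ _)
  obtain ⟨f, h0, hl, hstep⟩ := udist_exists hsc x y
  set n := G.udist x y with hn
  have key : ∀ k, k ≤ n → G.mw x (f k) ≤ D ^ k ∧ G.mw (f k) x ≤ D ^ k := by
    intro k
    induction k with
    | zero =>
      intro _
      rw [h0]
      constructor <;> · rw [mw_self hlf hsc]; norm_num
    | succ k ih =>
      intro hk
      obtain ⟨ih1, ih2⟩ := ih (by omega)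
      have hadj : G.uadj (f k) (f (k + 1)) := hstep k (by omega)
      have hb1 : G.mw (f k) (f (k + 1)) ≤ D := mw_le_of_uadj hlf hsc hΔ hadj
      have hb2 : G.mw (f (k + 1)) (f k) ≤ D := mw_le_of_uadj hlf hsc hΔ (uadj_symm hadj)
      constructor
      · calc G.mw x (f (k + 1)) = G.mw x (f k) * G.mw (f k) (f (k + 1)) :=
              (mw_cocycle hlf hsc _ _ _).symm
          _ ≤ D ^ k * D := by
              apply mul_le_mul ih1 hb1 (le_of_lt (mw_pos hlf hsc _ _)) (by positivity)
          _ = D ^ (k + 1) := by ring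
      · calc G.mw (f (k + 1)) x = G.mw (f (k + 1)) (f k) * G.mw (f k) x :=
              (mw_cocycle hlf hsc _ _ _).symm
          _ ≤ D * D ^ k := by
              apply mul_le_mul hb2 ih2 (le_of_lt (mw_pos hlf hsc _ _)) (by positivity)
          _ = D ^ (k + 1) := by ring
  have := key n le_rfl
  rw [hl] at this
  exact ⟨this.1, this.2⟩


/-! ### directed walks, rays, last-exit decomposition -/

theorem exists_dwalk (hsc : G.StronglyConnected) (x y : G.V) :
    ∃ (n : ℕ) (f : ℕ → G.V), f 0 = x ∧ f n = y ∧ ∀ i < n, G.Adj (f i) (f (i + 1)) := by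
  have h : Relation.ReflTransGen G.Adj x y := hsc x y
  induction h with
  | refl => exact ⟨0, fun _ => x, rfl, rfl, fun i hi => absurd hi (by omega)⟩
  | @tail b c _ hbc ih =>
    obtain ⟨n, f, h0, hl, hstep⟩ := ih
    refine ⟨n + 1, fun k => if k ≤ n then f k else c, ?_, ?_, ?_⟩
    · simpa using h0
    · simp
    · intro i hi
      rcases Nat.lt_or_ge i n with h | h
      · simpa [Nat.le_of_lt h, Nat.succ_le_of_lt h] using hstep i h
      · have hin : i = n := by omega
        subst hin
        simpa [hl] using hbc

theorem exists_unif_bound (h : ℕ → ℝ) (hpos : ∀ j, 0 < h j) (N : ℕ) :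
    ∃ B : ℝ, 1 ≤ B ∧ ∀ j ≤ N, h j ≤ B ∧ B⁻¹ ≤ h j := by
  induction N with
  | zero =>
    refine ⟨max (h 0) (max (h 0)⁻¹ 1), ?_, ?_⟩
    · exact le_trans (le_max_right _ _) (le_max_right _ _)
    · intro j hj
      interval_cases j
      constructor
      · exact le_max_left _ _
      · have h1 : (h 0)⁻¹ ≤ max (h 0) (max (h 0)⁻¹ 1) :=
          le_trans (le_max_left _ _) (le_max_right _ _)
        have h2 : 0 < (h 0)⁻¹ := inv_pos.mpr (hpos 0)
        calc (max (h 0) (max (h 0)⁻¹ 1))⁻¹ ≤ ((h 0)⁻¹)⁻¹ := by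
              apply inv_anti₀ h2 h1
          _ = h 0 := inv_inv _
  | succ N ih =>
    obtain ⟨B, hB1, hB⟩ := ih
    refine ⟨max B (max (h (N + 1)) (h (N + 1))⁻¹), ?_, ?_⟩
    · exact le_trans hB1 (le_max_left _ _)
    · intro j hj
      rcases Nat.lt_or_ge j (N + 1) with hlt | hge
      · obtain ⟨hu, hl⟩ := hB j (by omega)
        refine ⟨le_trans hu (le_max_left _ _), ?_⟩
        calc (max B (max (h (N + 1)) (h (N + 1))⁻¹))⁻¹ ≤ B⁻¹ := by
              apply inv_anti₀ (by linarith) (le_max_left _ _)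
          _ ≤ h j := hl
      · have hj1 : j = N + 1 := by omega
        subst hj1
        refine ⟨le_trans (le_max_left _ _) (le_max_right _ _), ?_⟩
        have h1 : (h (N + 1))⁻¹ ≤ max B (max (h (N + 1)) (h (N + 1))⁻¹) :=
          le_trans (le_max_right _ _) (le_max_right _ _)
        calc (max B (max (h (N + 1)) (h (N + 1))⁻¹))⁻¹ ≤ ((h (N + 1))⁻¹)⁻¹ :=
              inv_anti₀ (inv_pos.mpr (hpos _)) h1
          _ = h (N + 1) := inv_inv _

theorem last_exit (w : ℕ → G.V) (hfin : ∀ z : G.V, {t | w t = z}.Finite) :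
    ∃ nn : ℕ → ℕ, w (nn 0) = w 0 ∧ (∀ j, nn j + 1 ≤ nn (j + 1)) ∧
      (∀ j, w (nn (j + 1)) = w (nn j + 1)) ∧ (∀ j t, w t = w (nn j) → t ≤ nn j) := by
  have hbdd : ∀ z : G.V, BddAbove {t | w t = z} := fun z => (hfin z).bddAbove
  set nn : ℕ → ℕ := fun j => Nat.rec (sSup {t | w t = w 0})
    (fun _ njj => sSup {t | w t = w (njj + 1)}) j with hnn
  have hnn0 : nn 0 = sSup {t | w t = w 0} := rfl
  have hnnS : ∀ j, nn (j + 1) = sSup {t | w t = w (nn j + 1)} := fun j => rfl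
  have hmem0 : w (nn 0) = w 0 := by
    have := Nat.sSup_mem (s := {t | w t = w 0}) ⟨0, rfl⟩ (hbdd _)
    exact this
  have hmemS : ∀ j, w (nn (j + 1)) = w (nn j + 1) := by
    intro j
    have := Nat.sSup_mem (s := {t | w t = w (nn j + 1)}) ⟨nn j + 1, rfl⟩ (hbdd _)
    exact this
  have hstep : ∀ j, nn j + 1 ≤ nn (j + 1) := by
    intro j
    rw [hnnS]
    exact le_csSup (hbdd _) rfl
  have hlast : ∀ j t, w t = w (nn j) → t ≤ nn j := by
    intro j
    cases j with
    | zero =>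
      intro t ht
      rw [hmem0] at ht
      exact le_csSup (hbdd _) ht
    | succ j =>
      intro t ht
      rw [hmemS j] at ht
      rw [hnnS]
      exact le_csSup (hbdd _) ht
  exact ⟨nn, hmem0, hstep, hmemS, hlast⟩

theorem ray_exists (hlf : G.LocallyFinite) (hsc : G.StronglyConnected)
    (ψ : G.Aut) (u : G.V) (p : ℕ) (hp : 0 < p) (P : ℕ → G.V)
    (hP0 : P 0 = ψ • u) (hPp : P p = u) (hPstep : ∀ i < p, G.Adj (P i) (P (i + 1))) :
    ∃ w : ℕ → G.V, w 0 = u ∧ (∀ i, G.Adj (w (i + 1)) (w i)) ∧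
      (∀ i, G.mw (w i) u = G.mw (P (p - i % p)) u * (G.mw (ψ • u) u) ^ (i / p)) := by
  refine ⟨fun i => (ψ ^ (i / p)) • P (p - i % p), ?_, ?_, ?_⟩
  · beta_reduce
    rw [Nat.zero_div, Nat.zero_mod, Nat.sub_zero, hPp, pow_zero, one_smul]
  · intro i
    beta_reduce
    set k := i / p with hk
    set r := i % p with hr
    have hrp : r < p := Nat.mod_lt i hp
    have hidm : p * k + r = i := Nat.div_add_mod i p
    rcases Nat.lt_or_ge (r + 1) p with hcase | hcase
    · -- within block
      have hdm : (i + 1) / p = k ∧ (i + 1) % p = r + 1 := by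
        have := (Nat.div_mod_unique hp (a := i + 1) (d := k) (c := r + 1)).mpr
          ⟨by omega, hcase⟩
        exact this
      rw [hdm.1, hdm.2]
      have hadj : G.Adj (P (p - (r + 1))) (P (p - r)) := by
        have := hPstep (p - (r + 1)) (by omega)
        have heq : p - (r + 1) + 1 = p - r := by omega
        rw [heq] at this
        exact this
      exact smul_adj _ hadj
    · -- block boundary: r + 1 = p
      have hrp1 : r + 1 = p := by omega
      have hdm : (i + 1) / p = k + 1 ∧ (i + 1) % p = 0 := by
        have hexp : p * (k + 1) = p * k + p := by ring
        have := (Nat.div_mod_unique hp (a := i + 1) (d := k + 1) (c := 0)).mpr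
          ⟨by omega, hp⟩
        exact this
      rw [hdm.1, hdm.2, Nat.sub_zero, hPp]
      have hadj : G.Adj (P 0) (P 1) := hPstep 0 hp
      rw [hP0] at hadj
      have := smul_adj (ψ ^ k) hadj
      have heq1 : (ψ ^ k) • (ψ • u) = (ψ ^ (k + 1)) • u := by
        rw [pow_succ, mul_smul]
      rw [heq1] at this
      have heq2 : p - r = 1 := by omega
      rw [heq2]
      exact this
  · intro i
    beta_reduce
    calc G.mw ((ψ ^ (i / p)) • P (p - i % p)) u
        = G.mw ((ψ ^ (i / p)) • P (p - i % p)) ((ψ ^ (i / p)) • u) *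
            G.mw ((ψ ^ (i / p)) • u) u := (mw_cocycle hlf hsc _ _ _).symm
      _ = G.mw (P (p - i % p)) u * (G.mw (ψ • u) u) ^ (i / p) := by
          rw [mw_smul, mw_pow_smul hlf hsc]

theorem nat_div_cast_bounds (p t : ℕ) (hp : 0 < p) :
    ((t / p : ℕ) : ℝ) ≤ (t : ℝ) / (p : ℝ) ∧
    (t : ℝ) / (p : ℝ) - 1 ≤ ((t / p : ℕ) : ℝ) := by
  have h1 : p * (t / p) + t % p = t := Nat.div_add_mod t p
  have h2 : t % p < p := Nat.mod_lt t hp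
  have hp' : (0 : ℝ) < (p : ℝ) := by exact_mod_cast hp
  have h1' : (p : ℝ) * ((t / p : ℕ) : ℝ) + ((t % p : ℕ) : ℝ) = (t : ℝ) := by exact_mod_cast h1
  have h2' : ((t % p : ℕ) : ℝ) < (p : ℝ) := by exact_mod_cast h2
  have h3' : (0 : ℝ) ≤ ((t % p : ℕ) : ℝ) := by positivity
  constructor
  · rw [le_div_iff₀ hp']
    nlinarith
  · rw [sub_le_iff_le_add, div_le_iff₀ hp']
    nlinarith


theorem udist_comm (hsc : G.StronglyConnected) (x y : G.V) : G.udist x y = G.udist y x := by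
  have key : ∀ a b : G.V, G.udist b a ≤ G.udist a b := by
    intro a b
    obtain ⟨f, h0, hl, hstep⟩ := udist_exists hsc a b
    set n := G.udist a b with hn
    refine udist_le ⟨fun k => f (n - k), by beta_reduce; rw [Nat.sub_zero, hl],
      by beta_reduce; rw [Nat.sub_self, h0], fun i hi => ?_⟩
    beta_reduce
    have hs := hstep (n - i - 1) (by omega)
    have he : n - i - 1 + 1 = n - i := by omega
    rw [he] at hs
    have he2 : n - (i + 1) = n - i - 1 := by omega
    rw [he2]
    exact uadj_symm hs
  exact le_antisymm (key y x) (key x y)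

theorem mw_inv_smul (hlf : G.LocallyFinite) (hsc : G.StronglyConnected)
    (ψ : G.Aut) (u : G.V) : G.mw (ψ⁻¹ • u) u = (G.mw (ψ • u) u)⁻¹ := by
  have := mw_pow_smul_inv hlf hsc ψ u 1
  simpa using this

theorem exists_expanding (hlf : G.LocallyFinite) (hsc : G.StronglyConnected)
    (hnu : ¬ G.Unimodular) : ∃ (ψ : G.Aut) (u : G.V), 1 < G.mw (ψ • u) u := by
  rw [Unimodular] at hnu
  push_neg at hnu
  obtain ⟨u, v, hsame, hne⟩ := hnu
  obtain ⟨ψ₀, hψ₀⟩ := hsame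
  have hψ₀' : ψ₀ • u = v := hψ₀
  have hmw_ne : G.mw v u ≠ 1 := by
    intro h
    apply hne
    have h1 : (G.rr u v : ℝ) ≠ 0 := by
      exact_mod_cast (rr_pos hlf hsc u v).ne'
    rw [mw, div_eq_one_iff_eq h1] at h
    exact_mod_cast h.symm
  rcases lt_or_gt_of_ne hmw_ne with hlt | hgt
  · refine ⟨ψ₀⁻¹, v, ?_⟩
    have huv : ψ₀⁻¹ • v = u := by rw [← hψ₀']; exact inv_smul_smul ψ₀ u
    rw [huv]
    have h1 : G.mw u v = (G.mw v u)⁻¹ := mw_inv hlf hsc v u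
    rw [h1]
    exact one_lt_inv₀ (mw_pos hlf hsc v u) |>.mpr hlt
  · exact ⟨ψ₀, u, by rwa [hψ₀']⟩

theorem ray_package (hlf : G.LocallyFinite) (hsc : G.StronglyConnected)
    (ψ : G.Aut) (u : G.V) (hne : ψ • u ≠ u) (hcc : G.mw (ψ • u) u ≠ 1) :
    ∃ (p : ℕ) (x : ℕ → G.V) (nn : ℕ → ℕ) (B : ℝ),
      0 < p ∧ 1 ≤ B ∧
      x 0 = u ∧
      (∀ a, G.Adj (x (a + 1)) (x a)) ∧
      (∀ a b, a < b → x a ≠ x b) ∧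
      (∀ a, a ≤ nn a) ∧
      (∀ a d, nn a + d ≤ nn (a + d)) ∧
      (∀ a, B⁻¹ * (G.mw (ψ • u) u) ^ (nn a / p) ≤ G.mw (x a) u) ∧
      (∀ a, G.mw (x a) u ≤ B * (G.mw (ψ • u) u) ^ (nn a / p)) := by
  set cc := G.mw (ψ • u) u with hccdef
  have hccpos : 0 < cc := mw_pos hlf hsc _ _
  -- directed walk from ψ • u to u
  obtain ⟨p, P, hP0, hPp, hPstep⟩ := exists_dwalk hsc (ψ • u) u
  have hp : 0 < p := by
    rcases Nat.eq_zero_or_pos p with h0 | h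
    · exfalso
      apply hne
      have h' := hPp
      rw [h0] at h'
      rw [← hP0]
      exact h'
    · exact h
  obtain ⟨w, hw0, hwadj, hwmw⟩ := ray_exists hlf hsc ψ u p hp P hP0 hPp hPstep
  obtain ⟨B, hB1, hB⟩ := exists_unif_bound (fun j => G.mw (P j) u)
    (fun j => mw_pos hlf hsc _ _) p
  have hBpos : 0 < B := lt_of_lt_of_le one_pos hB1
  -- bounds on mw (w i) u
  have hwlb : ∀ i, B⁻¹ * cc ^ (i / p) ≤ G.mw (w i) u := by
    intro i
    rw [hwmw i]
    have := (hB (p - i % p) (by omega)).2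
    exact mul_le_mul_of_nonneg_right this (by positivity)
  have hwub : ∀ i, G.mw (w i) u ≤ B * cc ^ (i / p) := by
    intro i
    rw [hwmw i]
    have := (hB (p - i % p) (by omega)).1
    exact mul_le_mul_of_nonneg_right this (by positivity)
  -- visits are finite
  have hfin : ∀ z : G.V, {t | w t = z}.Finite := by
    intro z
    have hzpos : 0 < G.mw z u := mw_pos hlf hsc _ _
    rcases lt_or_gt_of_ne hcc with hlt | hgt
    · -- cc < 1 : decay
      have hinv : 1 < cc⁻¹ := (one_lt_inv₀ hccpos).mpr hlt
      obtain ⟨T, hT⟩ := pow_unbounded_of_one_lt (B * (G.mw z u)⁻¹) hinv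
      refine Set.Finite.subset (Set.finite_Iio (p * T)) ?_
      intro t ht
      simp only [Set.mem_setOf_eq] at ht
      simp only [Set.mem_Iio]
      have hb := hwub t
      rw [ht] at hb
      -- mw z u ≤ B * cc ^ (t/p)  ⟹  (cc⁻¹)^(t/p) ≤ B * (mw z u)⁻¹
      have h1 : (cc⁻¹) ^ (t / p) ≤ B * (G.mw z u)⁻¹ := by
        rw [inv_pow]
        rw [inv_le_iff_one_le_mul₀ (by positivity)]
        calc (1 : ℝ) = (G.mw z u) * (G.mw z u)⁻¹ := by field_simp
          _ ≤ (B * cc ^ (t / p)) * (G.mw z u)⁻¹ := by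
              apply mul_le_mul_of_nonneg_right hb (by positivity)
          _ = B * (G.mw z u)⁻¹ * cc ^ (t / p) := by ring
      have h2 : t / p < T := by
        by_contra hcon
        push_neg at hcon
        have : (cc⁻¹) ^ T ≤ (cc⁻¹) ^ (t / p) := pow_le_pow_right₀ hinv.le hcon
        linarith
      have h3 := (Nat.div_lt_iff_lt_mul hp).mp h2
      have h4 : T * p = p * T := Nat.mul_comm T p
      omega
    · -- cc > 1 : growth
      obtain ⟨T, hT⟩ := pow_unbounded_of_one_lt (B * G.mw z u) hgt
      refine Set.Finite.subset (Set.finite_Iio (p * T)) ?_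
      intro t ht
      simp only [Set.mem_setOf_eq] at ht
      simp only [Set.mem_Iio]
      have hb := hwlb t
      rw [ht] at hb
      have h1 : cc ^ (t / p) ≤ B * G.mw z u := by
        have := mul_le_mul_of_nonneg_left hb hBpos.le
        calc cc ^ (t / p) = B * (B⁻¹ * cc ^ (t / p)) := by field_simp
          _ ≤ B * G.mw z u := mul_le_mul_of_nonneg_left hb hBpos.le
      have h2 : t / p < T := by
        by_contra hcon
        push_neg at hcon
        have : cc ^ T ≤ cc ^ (t / p) := pow_le_pow_right₀ hgt.le hcon
        linarith
      have h3 := (Nat.div_lt_iff_lt_mul hp).mp h2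
      have h4 : T * p = p * T := Nat.mul_comm T p
      omega
  obtain ⟨nn, hnn0, hnnstep, hnnS, hnnlast⟩ := last_exit w hfin
  have hmono : ∀ a b, a < b → nn a < nn b := by
    intro a b hab
    induction b with
    | zero => omega
    | succ b ih =>
      rcases Nat.lt_or_ge a b with h | h
      · exact lt_of_lt_of_le (ih h) (by have := hnnstep b; omega)
      · have : a = b := by omega
        subst this
        have := hnnstep a
        omega
  have hge : ∀ a, a ≤ nn a := by
    intro a
    induction a with
    | zero => exact Nat.zero_le _
    | succ a ih =>
      have := hnnstep a
      omega
  have hgap : ∀ a d, nn a + d ≤ nn (a + d) := by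
    intro a d
    induction d with
    | zero => simp
    | succ d ih =>
      have h1 := hnnstep (a + d)
      have : a + (d + 1) = (a + d) + 1 := by omega
      rw [this]
      omega
  refine ⟨p, fun a => w (nn a), nn, B, hp, hB1, ?_, ?_, ?_, hge, hgap, ?_, ?_⟩
  · beta_reduce
    rw [hnn0, hw0]
  · intro a
    beta_reduce
    rw [hnnS a]
    exact hwadj (nn a)
  · intro a b hab heq
    beta_reduce at heq
    have := hnnlast a (nn b) heq.symm
    have := hmono a b hab
    omega
  · intro a
    exact hwlb (nn a)
  · intro a
    exact hwub (nn a)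



theorem final_arith (d U R lc lD lB : ℝ) (hd1 : 1 ≤ d) (hU1 : 1 ≤ U)
    (hlc : 0 < lc) (hlD : 0 < lD) (hlB : 0 ≤ lB) (hR : 0 < R)
    (hkey : d / R * lc - 2 * lc - 2 * lB ≤ U * lD) :
    lc / (R * (lD + 2 * lc + 2 * lB)) * d ≤ U := by
  have hgD : 0 < lD + (2 * lc + 2 * lB) := by linarith
  have h2 : 2 * lc + 2 * lB ≤ U * (2 * lc + 2 * lB) :=
    le_mul_of_one_le_left (by linarith) hU1
  have h3 : d / R * lc ≤ U * (lD + (2 * lc + 2 * lB)) := by nlinarith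
  have hαd : lc / (R * (lD + 2 * lc + 2 * lB)) * d = (d / R * lc) / (lD + (2 * lc + 2 * lB)) := by
    field_simp
    ring
  rw [hαd, div_le_iff₀ hgD]
  exact h3

/-! ### main construction -/

theorem main (G : Dgraph) (hlf : G.LocallyFinite) (hsc : G.StronglyConnected)
    (hqt : G.QuasiTransitive) (hnu : ¬ G.Unimodular) :
    ∃ α : ℝ, 0 < α ∧ ∃ v : ℤ → G.V,
      (∀ i j : ℤ, α * (|i - j| : ℤ) ≤ (G.udist (v i) (v j) : ℝ)) ∧
      ∀ i : ℕ,
        (∃ e : G.E, G.src e = v ((i : ℤ) + 1) ∧ G.tgt e = v (i : ℤ)) ∧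
        (∃ e : G.E, G.src e = v (-(i : ℤ) - 1) ∧ G.tgt e = v (-(i : ℤ))) := by
  classical
  obtain ⟨Δ, hΔ⟩ := exists_deg_bound hqt
  set D : ℝ := max (Δ : ℝ) 2 with hDdef
  have hD1 : (1 : ℝ) < D := lt_of_lt_of_le one_lt_two (le_max_right _ _)
  obtain ⟨ψ, u, hc⟩ := exists_expanding hlf hsc hnu
  set c : ℝ := G.mw (ψ • u) u with hcdef
  have hcpos : (0 : ℝ) < c := lt_trans one_pos hc
  have hc1 : (1 : ℝ) ≤ c := hc.le
  have hneP : ψ • u ≠ u := by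
    intro h
    rw [hcdef, h, mw_self hlf hsc] at hc
    exact lt_irrefl 1 hc
  have hneQ : ψ⁻¹ • u ≠ u := by
    intro h
    apply hneP
    have h2 := congrArg (fun z => ψ • z) h
    simp only [smul_inv_smul] at h2
    exact h2.symm
  have hcinv : G.mw (ψ⁻¹ • u) u = c⁻¹ := mw_inv_smul hlf hsc ψ u
  have hccQ : G.mw (ψ⁻¹ • u) u ≠ 1 := by
    rw [hcinv]
    intro h
    rw [inv_eq_one] at h
    exact (ne_of_gt hc) h
  obtain ⟨p, x, np, B₁, hp, hB₁, hx0, hxadj, hxinj, hnp_ge, hnp_gap, hxlb, hxub⟩ :=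
    ray_package hlf hsc ψ u hneP (ne_of_gt hc)
  obtain ⟨q, y, nq, B₂, hq, hB₂, hy0, hyadj, hyinj, hnq_ge, hnq_gap, hylb, hyub⟩ :=
    ray_package hlf hsc ψ⁻¹ u hneQ hccQ
  set B : ℝ := max B₁ B₂ with hBdef
  have hB1 : (1 : ℝ) ≤ B := le_trans hB₁ (le_max_left _ _)
  have hBpos : (0 : ℝ) < B := lt_of_lt_of_le one_pos hB1
  have hB₁pos : (0 : ℝ) < B₁ := lt_of_lt_of_le one_pos hB₁
  have hB₂pos : (0 : ℝ) < B₂ := lt_of_lt_of_le one_pos hB₂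
  -- uniform bounds with common B
  have hxlb' : ∀ a, B⁻¹ * c ^ (np a / p) ≤ G.mw (x a) u := by
    intro a
    refine le_trans ?_ (hxlb a)
    apply mul_le_mul_of_nonneg_right _ (by positivity)
    exact inv_anti₀ hB₁pos (le_max_left _ _)
  have hxub' : ∀ a, G.mw (x a) u ≤ B * c ^ (np a / p) := by
    intro a
    refine le_trans (hxub a) ?_
    exact mul_le_mul_of_nonneg_right (le_max_left _ _) (by positivity)
  have hylb' : ∀ a, B⁻¹ * (c ^ (nq a / q))⁻¹ ≤ G.mw (y a) u := by
    intro a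
    refine le_trans ?_ (hylb a)
    rw [hcinv, inv_pow]
    apply mul_le_mul_of_nonneg_right _ (by positivity)
    exact inv_anti₀ hB₂pos (le_max_right _ _)
  have hyub' : ∀ a, G.mw (y a) u ≤ B * (c ^ (nq a / q))⁻¹ := by
    intro a
    refine le_trans (hyub a) ?_
    rw [hcinv, inv_pow]
    exact mul_le_mul_of_nonneg_right (le_max_right _ _) (by positivity)
  -- the splice point
  have hxy0 : x 0 = y 0 := by rw [hx0, hy0]
  set Iset : Set ℕ := {k | ∃ s t, s + t = k ∧ x s = y t} with hIdef
  have hI0 : (0 : ℕ) ∈ Iset := ⟨0, 0, rfl, hxy0⟩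
  obtain ⟨T, hT⟩ := pow_unbounded_of_one_lt (B * B) hc
  have hIbdd : ∀ k ∈ Iset, k < p * T + q * T := by
    rintro k ⟨s, t, rfl, hst⟩
    have hmeq : G.mw (x s) u = G.mw (y t) u := by rw [hst]
    have l1 := hxlb' s
    have r1 := hyub' t
    have e1 : B⁻¹ * c ^ (np s / p) ≤ B * (c ^ (nq t / q))⁻¹ := by
      calc B⁻¹ * c ^ (np s / p) ≤ G.mw (x s) u := l1
        _ = G.mw (y t) u := hmeq
        _ ≤ B * (c ^ (nq t / q))⁻¹ := r1
    have e2 : (c ^ (nq t / q))⁻¹ ≤ 1 := inv_le_one_of_one_le₀ (one_le_pow₀ hc1)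
    have e3 : (1 : ℝ) ≤ c ^ (np s / p) := one_le_pow₀ hc1
    have e4 : (0 : ℝ) < c ^ (nq t / q) := by positivity
    have h1 : c ^ (np s / p) ≤ B * B := by
      calc c ^ (np s / p) = B * (B⁻¹ * c ^ (np s / p)) := by field_simp
        _ ≤ B * (B * (c ^ (nq t / q))⁻¹) := mul_le_mul_of_nonneg_left e1 hBpos.le
        _ ≤ B * (B * 1) := by
            apply mul_le_mul_of_nonneg_left _ hBpos.le
            exact mul_le_mul_of_nonneg_left e2 hBpos.le
        _ = B * B := by ring
    have h2 : c ^ (nq t / q) ≤ B * B := by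
      have e5 : B⁻¹ * 1 ≤ B * (c ^ (nq t / q))⁻¹ := by
        calc B⁻¹ * 1 ≤ B⁻¹ * c ^ (np s / p) := mul_le_mul_of_nonneg_left e3 (by positivity)
          _ ≤ B * (c ^ (nq t / q))⁻¹ := e1
      -- multiply by B * c ^ (nq t / q)
      have := mul_le_mul_of_nonneg_right e5 (le_of_lt (mul_pos hBpos e4))
      calc c ^ (nq t / q) = (B⁻¹ * 1) * (B * c ^ (nq t / q)) := by field_simp
        _ ≤ (B * (c ^ (nq t / q))⁻¹) * (B * c ^ (nq t / q)) := this
        _ = B * B := by field_simp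
    have hnps : np s / p < T := by
      by_contra hcon
      push_neg at hcon
      have : c ^ T ≤ c ^ (np s / p) := pow_le_pow_right₀ hc1 hcon
      linarith
    have hnqt : nq t / q < T := by
      by_contra hcon
      push_neg at hcon
      have : c ^ T ≤ c ^ (nq t / q) := pow_le_pow_right₀ hc1 hcon
      linarith
    have hs1 : s / p < T := lt_of_le_of_lt (Nat.div_le_div_right (hnp_ge s)) hnps
    have ht1 : t / q < T := lt_of_le_of_lt (Nat.div_le_div_right (hnq_ge t)) hnqt
    have hs2 := (Nat.div_lt_iff_lt_mul hp).mp hs1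
    have ht2 := (Nat.div_lt_iff_lt_mul hq).mp ht1
    have : T * p = p * T := Nat.mul_comm T p
    have : T * q = q * T := Nat.mul_comm T q
    omega
  have hbddI : BddAbove Iset := ⟨p * T + q * T, fun k hk => (hIbdd k hk).le⟩
  have hKmem := Nat.sSup_mem ⟨0, hI0⟩ hbddI
  set K := sSup Iset with hKdef
  obtain ⟨s0, t0, hst0, hxyK⟩ := hKmem
  have hmax : ∀ s t, x s = y t → s + t ≤ K := fun s t h => le_csSup hbddI ⟨s, t, rfl, h⟩
  -- the doubly infinite sequence
  set V : ℤ → G.V := fun i => if 0 ≤ i then x (s0 + i.toNat) else y (t0 + (-i).toNat)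
    with hVdef
  have hVpos : ∀ a : ℕ, V (a : ℤ) = x (s0 + a) := by
    intro a
    simp only [hVdef]
    rw [if_pos (Int.natCast_nonneg a)]
    norm_num
  have hVneg : ∀ a : ℕ, V (-(a : ℤ)) = y (t0 + a) := by
    intro a
    cases a with
    | zero =>
      simp only [hVdef, Nat.cast_zero, neg_zero]
      rw [if_pos le_rfl]
      norm_num
      rw [hxyK]
    | succ a =>
      simp only [hVdef]
      rw [if_neg (by push_cast; omega)]
      norm_num
  -- edge conditions
  have hedges : ∀ i : ℕ,
      (∃ e : G.E, G.src e = V ((i : ℤ) + 1) ∧ G.tgt e = V (i : ℤ)) ∧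
      (∃ e : G.E, G.src e = V (-(i : ℤ) - 1) ∧ G.tgt e = V (-(i : ℤ))) := by
    intro i
    constructor
    · have h1 : V ((i : ℤ) + 1) = x (s0 + i + 1) := by
        have : ((i : ℤ) + 1) = ((i + 1 : ℕ) : ℤ) := by push_cast; ring
        rw [this, hVpos (i + 1), show s0 + (i + 1) = s0 + i + 1 by ring]
      have h2 : V (i : ℤ) = x (s0 + i) := hVpos i
      rw [h1, h2]
      exact hxadj (s0 + i)
    · have h1 : V (-(i : ℤ) - 1) = y (t0 + i + 1) := by
        have : (-(i : ℤ) - 1) = -((i + 1 : ℕ) : ℤ) := by push_cast; ring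
        rw [this, hVneg (i + 1), show t0 + (i + 1) = t0 + i + 1 by ring]
      have h2 : V (-(i : ℤ)) = y (t0 + i) := hVneg i
      rw [h1, h2]
      exact hyadj (t0 + i)
  -- injectivity
  have hVne : ∀ i j : ℤ, i < j → V i ≠ V j := by
    intro i j hij
    rcases le_or_gt 0 i with hi | hi
    · -- both nonnegative
      have hj : 0 ≤ j := le_trans hi hij.le
      have e1 : V i = x (s0 + i.toNat) := by
        have h' := hVpos i.toNat
        rwa [Int.toNat_of_nonneg hi] at h'
      have e2 : V j = x (s0 + j.toNat) := by
        have h' := hVpos j.toNat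
        rwa [Int.toNat_of_nonneg hj] at h'
      rw [e1, e2]
      exact hxinj (s0 + i.toNat) (s0 + j.toNat) (by omega)
    · rcases le_or_gt 0 j with hj | hj
      · -- i negative, j nonnegative
        have e1 : V i = y (t0 + (-i).toNat) := by
          have h' := hVneg (-i).toNat
          rwa [Int.toNat_of_nonneg (by omega : (0:ℤ) ≤ -i), neg_neg] at h'
        have e2 : V j = x (s0 + j.toNat) := by
          have h' := hVpos j.toNat
          rwa [Int.toNat_of_nonneg hj] at h'
        rw [e1, e2]
        intro heq
        have := hmax (s0 + j.toNat) (t0 + (-i).toNat) heq.symm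
        rw [← hst0] at this
        omega
      · -- both negative
        have e1 : V i = y (t0 + (-i).toNat) := by
          have h' := hVneg (-i).toNat
          rwa [Int.toNat_of_nonneg (by omega : (0:ℤ) ≤ -i), neg_neg] at h'
        have e2 : V j = y (t0 + (-j).toNat) := by
          have h' := hVneg (-j).toNat
          rwa [Int.toNat_of_nonneg (by omega : (0:ℤ) ≤ -j), neg_neg] at h'
        rw [e1, e2]
        exact (hyinj (t0 + (-j).toNat) (t0 + (-i).toNat) (by omega)).symm
  -- helper for splitting mw through u
  have hsplit : ∀ z1 z2 : G.V, G.mw z1 z2 = G.mw z1 u * (G.mw z2 u)⁻¹ := by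
    intro z1 z2
    rw [← mw_cocycle hlf hsc z1 u z2, mw_inv hlf hsc z2 u]
  set R : ℝ := ((max p q : ℕ) : ℝ) with hRdef
  have hRp : (p : ℝ) ≤ R := by exact_mod_cast Nat.cast_le.mpr (le_max_left p q)
  have hRq : (q : ℝ) ≤ R := by exact_mod_cast Nat.cast_le.mpr (le_max_right p q)
  have hppos : (0 : ℝ) < (p : ℝ) := by exact_mod_cast hp
  have hqpos : (0 : ℝ) < (q : ℝ) := by exact_mod_cast hq
  have hRpos : (0 : ℝ) < R := lt_of_lt_of_le hppos hRp
  -- the key lower bound on mw along the sequence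
  have hlow : ∀ i j : ℤ, j ≤ i → ∃ e f : ℕ,
      ((i - j : ℤ) : ℝ) / R - 2 ≤ (e : ℝ) - (f : ℝ) ∧
      B⁻¹ * B⁻¹ * (c ^ e * (c ^ f)⁻¹) ≤ G.mw (V i) (V j) := by
    intro i j hji
    rcases le_or_gt 0 j with hj | hj
    · -- case A : 0 ≤ j ≤ i, both on the positive ray
      have hi : (0 : ℤ) ≤ i := le_trans hj hji
      set a := i.toNat with ha
      set b := j.toNat with hb
      have hab : b ≤ a := by omega
      have hia : ((a : ℕ) : ℤ) = i := Int.toNat_of_nonneg hi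
      have hjb : ((b : ℕ) : ℤ) = j := Int.toNat_of_nonneg hj
      have hVi : V i = x (s0 + a) := by
        have h' := hVpos a
        rwa [hia] at h'
      have hVj : V j = x (s0 + b) := by
        have h' := hVpos b
        rwa [hjb] at h'
      refine ⟨np (s0 + a) / p, np (s0 + b) / p, ?_, ?_⟩
      · have hcast : ((i - j : ℤ) : ℝ) = (a : ℝ) - b := by
          rw [← hia, ← hjb]; push_cast; ring
        have hgap := hnp_gap (s0 + b) (a - b)
        have hrw : s0 + b + (a - b) = s0 + a := by omega
        rw [hrw] at hgap
        have f1 := (nat_div_cast_bounds p (np (s0 + a)) hp).2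
        have f2 := (nat_div_cast_bounds p (np (s0 + b)) hp).1
        have hdnn : (0 : ℝ) ≤ (a : ℝ) - b := by
          have : (b : ℝ) ≤ a := by exact_mod_cast hab
          linarith
        have hgap' : (a : ℝ) - b ≤ (np (s0 + a) : ℝ) - np (s0 + b) := by
          have h1 : (np (s0 + b) : ℝ) + ((a - b : ℕ) : ℝ) ≤ (np (s0 + a) : ℝ) := by
            exact_mod_cast hgap
          have h2 : ((a - b : ℕ) : ℝ) = (a : ℝ) - b := by
            rw [Nat.cast_sub hab]
          linarith
        have hdivR : ((a : ℝ) - b) / R ≤ ((a : ℝ) - b) / p :=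
          div_le_div_of_nonneg_left hdnn hppos hRp
        have hdivp : ((a : ℝ) - b) / p ≤ ((np (s0 + a) : ℝ) - np (s0 + b)) / p :=
          (div_le_div_iff_of_pos_right hppos).mpr hgap'
        have hsub : ((np (s0 + a) : ℝ) - np (s0 + b)) / p
            = (np (s0 + a) : ℝ) / p - (np (s0 + b) : ℝ) / p := sub_div _ _ _
        rw [hcast]
        linarith
      · rw [hVi, hVj, hsplit]
        have m1 := hxlb' (s0 + a)
        have m2 : (B * c ^ (np (s0 + b) / p))⁻¹ ≤ (G.mw (x (s0 + b)) u)⁻¹ :=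
          inv_anti₀ (mw_pos hlf hsc _ _) (hxub' _)
        calc B⁻¹ * B⁻¹ * (c ^ (np (s0 + a) / p) * (c ^ (np (s0 + b) / p))⁻¹)
            = (B⁻¹ * c ^ (np (s0 + a) / p)) * (B * c ^ (np (s0 + b) / p))⁻¹ := by
              rw [mul_inv]; ring
          _ ≤ G.mw (x (s0 + a)) u * (G.mw (x (s0 + b)) u)⁻¹ :=
              mul_le_mul m1 m2 (by positivity) (mw_pos hlf hsc _ _).le
    · rcases le_or_gt i 0 with hi | hi
      · -- case B : j ≤ i ≤ 0, both on the negative ray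
        set a := (-i).toNat with ha
        set b := (-j).toNat with hb
        have hab : a ≤ b := by omega
        have hia : ((a : ℕ) : ℤ) = -i := Int.toNat_of_nonneg (by omega)
        have hjb : ((b : ℕ) : ℤ) = -j := Int.toNat_of_nonneg (by omega)
        have hVi : V i = y (t0 + a) := by
          have h' := hVneg a
          rwa [hia, neg_neg] at h'
        have hVj : V j = y (t0 + b) := by
          have h' := hVneg b
          rwa [hjb, neg_neg] at h'
        refine ⟨nq (t0 + b) / q, nq (t0 + a) / q, ?_, ?_⟩
        · have hcast : ((i - j : ℤ) : ℝ) = (b : ℝ) - a := by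
            have e1 : (i : ℤ) = -((a : ℕ) : ℤ) := by omega
            have e2 : (j : ℤ) = -((b : ℕ) : ℤ) := by omega
            rw [e1, e2]; push_cast; ring
          have hgap := hnq_gap (t0 + a) (b - a)
          have hrw : t0 + a + (b - a) = t0 + b := by omega
          rw [hrw] at hgap
          have f1 := (nat_div_cast_bounds q (nq (t0 + b)) hq).2
          have f2 := (nat_div_cast_bounds q (nq (t0 + a)) hq).1
          have hdnn : (0 : ℝ) ≤ (b : ℝ) - a := by
            have : (a : ℝ) ≤ b := by exact_mod_cast hab
            linarith
          have hgap' : (b : ℝ) - a ≤ (nq (t0 + b) : ℝ) - nq (t0 + a) := by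
            have h1 : (nq (t0 + a) : ℝ) + ((b - a : ℕ) : ℝ) ≤ (nq (t0 + b) : ℝ) := by
              exact_mod_cast hgap
            have h2 : ((b - a : ℕ) : ℝ) = (b : ℝ) - a := by
              rw [Nat.cast_sub hab]
            linarith
          have hdivR : ((b : ℝ) - a) / R ≤ ((b : ℝ) - a) / q :=
            div_le_div_of_nonneg_left hdnn hqpos hRq
          have hdivp : ((b : ℝ) - a) / q ≤ ((nq (t0 + b) : ℝ) - nq (t0 + a)) / q :=
            (div_le_div_iff_of_pos_right hqpos).mpr hgap'
          have hsub : ((nq (t0 + b) : ℝ) - nq (t0 + a)) / q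
              = (nq (t0 + b) : ℝ) / q - (nq (t0 + a) : ℝ) / q := sub_div _ _ _
          rw [hcast]
          linarith
        · rw [hVi, hVj, hsplit]
          have m1 := hylb' (t0 + a)
          have m2 : (B * (c ^ (nq (t0 + b) / q))⁻¹)⁻¹ ≤ (G.mw (y (t0 + b)) u)⁻¹ :=
            inv_anti₀ (mw_pos hlf hsc _ _) (hyub' _)
          calc B⁻¹ * B⁻¹ * (c ^ (nq (t0 + b) / q) * (c ^ (nq (t0 + a) / q))⁻¹)
              = (B⁻¹ * (c ^ (nq (t0 + a) / q))⁻¹) * (B * (c ^ (nq (t0 + b) / q))⁻¹)⁻¹ := by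
                rw [mul_inv, inv_inv]; ring
            _ ≤ G.mw (y (t0 + a)) u * (G.mw (y (t0 + b)) u)⁻¹ :=
                mul_le_mul m1 m2 (by positivity) (mw_pos hlf hsc _ _).le
      · -- case C : j < 0 < i, across the splice point
        set a := i.toNat with ha
        set b := (-j).toNat with hb
        have hia : ((a : ℕ) : ℤ) = i := Int.toNat_of_nonneg (by omega)
        have hjb : ((b : ℕ) : ℤ) = -j := Int.toNat_of_nonneg (by omega)
        have hVi : V i = x (s0 + a) := by
          have h' := hVpos a
          rwa [hia] at h'
        have hVj : V j = y (t0 + b) := by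
          have h' := hVneg b
          rwa [hjb, neg_neg] at h'
        refine ⟨np (s0 + a) / p + nq (t0 + b) / q, 0, ?_, ?_⟩
        · have hcast : ((i - j : ℤ) : ℝ) = (a : ℝ) + b := by
            have e1 : (i : ℤ) = ((a : ℕ) : ℤ) := hia.symm
            have e2 : (j : ℤ) = -((b : ℕ) : ℤ) := by omega
            rw [e1, e2]; push_cast; ring
          have f1 := (nat_div_cast_bounds p (np (s0 + a)) hp).2
          have f2 := (nat_div_cast_bounds q (nq (t0 + b)) hq).2
          have g1 : (a : ℝ) ≤ (np (s0 + a) : ℝ) := by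
            have : a ≤ np (s0 + a) := le_trans (by omega) (hnp_ge (s0 + a))
            exact_mod_cast this
          have g2 : (b : ℝ) ≤ (nq (t0 + b) : ℝ) := by
            have : b ≤ nq (t0 + b) := le_trans (by omega) (hnq_ge (t0 + b))
            exact_mod_cast this
          have d1 : (a : ℝ) / R ≤ (a : ℝ) / p :=
            div_le_div_of_nonneg_left (by positivity) hppos hRp
          have d2 : (b : ℝ) / R ≤ (b : ℝ) / q :=
            div_le_div_of_nonneg_left (by positivity) hqpos hRq
          have d3 : (a : ℝ) / p ≤ (np (s0 + a) : ℝ) / p := (div_le_div_iff_of_pos_right hppos).mpr g1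
          have d4 : (b : ℝ) / q ≤ (nq (t0 + b) : ℝ) / q := (div_le_div_iff_of_pos_right hqpos).mpr g2
          have hadd : ((a : ℝ) + b) / R = (a : ℝ) / R + (b : ℝ) / R := add_div _ _ _
          have hcst : ((np (s0 + a) / p + nq (t0 + b) / q : ℕ) : ℝ)
              = ((np (s0 + a) / p : ℕ) : ℝ) + ((nq (t0 + b) / q : ℕ) : ℝ) := by push_cast; ring
          rw [hcast, hcst]
          push_cast
          linarith
        · rw [hVi, hVj, hsplit]
          have m1 := hxlb' (s0 + a)
          have m2 : (B * (c ^ (nq (t0 + b) / q))⁻¹)⁻¹ ≤ (G.mw (y (t0 + b)) u)⁻¹ :=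
            inv_anti₀ (mw_pos hlf hsc _ _) (hyub' _)
          calc B⁻¹ * B⁻¹ * (c ^ (np (s0 + a) / p + nq (t0 + b) / q) * (c ^ (0 : ℕ))⁻¹)
              = (B⁻¹ * c ^ (np (s0 + a) / p)) * (B * (c ^ (nq (t0 + b) / q))⁻¹)⁻¹ := by
                rw [pow_zero, inv_one, pow_add, mul_inv, inv_inv]; ring
            _ ≤ G.mw (x (s0 + a)) u * (G.mw (y (t0 + b)) u)⁻¹ :=
                mul_le_mul m1 m2 (by positivity) (mw_pos hlf hsc _ _).le
  -- log conversion
  set lc : ℝ := Real.log c with hlcdef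
  set lD : ℝ := Real.log D with hlDdef
  set lB : ℝ := Real.log B with hlBdef
  have hlc : 0 < lc := Real.log_pos hc
  have hlD : 0 < lD := Real.log_pos hD1
  have hlB : 0 ≤ lB := Real.log_nonneg hB1
  have hudistlog : ∀ i j : ℤ, j ≤ i → ∀ n : ℕ, G.mw (V i) (V j) ≤ D ^ n →
      ((i - j : ℤ) : ℝ) / R * lc - 2 * lc - 2 * lB ≤ (n : ℝ) * lD := by
    intro i j hji n hn
    obtain ⟨e, f, hef, hbound⟩ := hlow i j hji
    have hmwpos : 0 < G.mw (V i) (V j) := mw_pos hlf hsc _ _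
    have hLpos : (0 : ℝ) < B⁻¹ * B⁻¹ * (c ^ e * (c ^ f)⁻¹) := by positivity
    have l1 : Real.log (B⁻¹ * B⁻¹ * (c ^ e * (c ^ f)⁻¹)) ≤ Real.log (G.mw (V i) (V j)) :=
      Real.log_le_log hLpos hbound
    have l2 : Real.log (G.mw (V i) (V j)) ≤ Real.log (D ^ n) :=
      Real.log_le_log hmwpos hn
    have e2 : Real.log (D ^ n) = (n : ℝ) * lD := by rw [Real.log_pow]
    have e1 : Real.log (B⁻¹ * B⁻¹ * (c ^ e * (c ^ f)⁻¹))
        = -lB - lB + ((e : ℝ) * lc - (f : ℝ) * lc) := by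
      rw [Real.log_mul (by positivity) (by positivity),
        Real.log_mul (by positivity) (by positivity),
        Real.log_mul (by positivity) (by positivity),
        Real.log_inv, Real.log_inv, Real.log_pow, Real.log_pow]
      ring
    have hm := mul_le_mul_of_nonneg_right hef hlc.le
    have hexp : ((i - j : ℤ) : ℝ) / R * lc - 2 * lc
        = (((i - j : ℤ) : ℝ) / R - 2) * lc := by ring
    have hef2 : (((i - j : ℤ) : ℝ) / R - 2) * lc ≤ ((e : ℝ) - f) * lc := hm
    have hef3 : ((e : ℝ) - f) * lc = (e : ℝ) * lc - (f : ℝ) * lc := by ring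
    linarith
  -- choose α
  set α : ℝ := lc / (R * (lD + 2 * lc + 2 * lB)) with hαdef
  have hαpos : 0 < α := by
    apply div_pos hlc
    apply mul_pos hRpos
    linarith
  refine ⟨α, hαpos, V, ?_, hedges⟩
  intro i j
  rcases eq_or_ne i j with rfl | hne
  · simp
  · have hone : 1 ≤ G.udist (V i) (V j) := by
      by_contra hcon
      push_neg at hcon
      have h0 : G.udist (V i) (V j) = 0 := by omega
      have heq := eq_of_udist_eq_zero hsc h0
      rcases lt_or_gt_of_ne hne with h | h
      · exact hVne i j h heq
      · exact hVne j i h heq.symm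
    have hkey : ((|i - j| : ℤ) : ℝ) / R * lc - 2 * lc - 2 * lB
        ≤ (G.udist (V i) (V j) : ℝ) * lD := by
      rcases le_total j i with h | h
      · have habs : |i - j| = i - j := abs_of_nonneg (by omega)
        rw [habs]
        refine hudistlog i j h (G.udist (V i) (V j)) ?_
        have hb := (mw_le_pow_udist hlf hsc hΔ (V i) (V j)).1
        rwa [← hDdef] at hb
      · have habs : |i - j| = j - i := by
          rw [abs_sub_comm]
          exact abs_of_nonneg (by omega)
        rw [habs]
        refine hudistlog j i h (G.udist (V i) (V j)) ?_
        have hb := (mw_le_pow_udist hlf hsc hΔ (V i) (V j)).2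
        rwa [← hDdef] at hb
    set d : ℝ := ((|i - j| : ℤ) : ℝ) with hddef
    set U : ℝ := (G.udist (V i) (V j) : ℝ) with hUdef
    have hU1 : (1 : ℝ) ≤ U := by rw [hUdef]; exact_mod_cast hone
    have hd1 : (1 : ℝ) ≤ d := by
      have h1 : (0 : ℤ) < |i - j| := abs_pos.mpr (sub_ne_zero.mpr hne)
      have h2 : (1 : ℤ) ≤ |i - j| := h1
      rw [hddef]
      exact_mod_cast h2
    -- abbreviations
    rw [hαdef]
    exact final_arith d U R lc lD lB hd1 hU1 hlc hlD hlB hRpos hkey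

end Dgraph

/-- a non-unimodular quasi-transitive graph contains an α-quasi-geodesic
`(v_i)_{i ∈ ℤ}` with directed edges from `v_{i+1}` to `v_i` and from `v_{-i-1}` to
`v_{-i}` for all `i ≥ 0`. -/
theorem exists_quasi_geodesic_of_not_unimodular (G : Dgraph) (hinf : Infinite G.V)
    (hlf : G.LocallyFinite) (hsc : G.StronglyConnected) (hqt : G.QuasiTransitive)
    (hnu : ¬ G.Unimodular) :
    ∃ α : ℝ, 0 < α ∧ ∃ v : ℤ → G.V,
      (∀ i j : ℤ, α * (|i - j| : ℤ) ≤ (G.udist (v i) (v j) : ℝ)) ∧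
      ∀ i : ℕ,
        (∃ e : G.E, G.src e = v ((i : ℤ) + 1) ∧ G.tgt e = v (i : ℤ)) ∧
        (∃ e : G.E, G.src e = v (-(i : ℤ) - 1) ∧ G.tgt e = v (-(i : ℤ))) := by
  exact Dgraph.main G hlf hsc hqt hnu
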